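/- Let N ≥ 1 and let A_0, …, A_{N−1} be n×n real matrices. Let Ǎ be the Nn×Nn block matrix whose (i,j) block equals A_j if i = (j+1) mod N and 0 otherwise, and let Φ := A_{N−1}A_{N−2}···A_0 be the monodromy matrix. Then the spectral radius of Ǎ equals the N-th root of the spectral radius of Φ, i.e. ρ(Ǎ) = ρ(Φ)^{1/N}. In particular, ρ(Ǎ) < 1 if and only if ρ(Φ) < 1. -/

import Mathlib

open Matrix
open scoped ENNReal NNReal

/-- Spectral radius of a real square matrix: the spectral radius (max |λ| over complex
eigenvalues) of the matrix viewed as a complex matrix. -/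
noncomputable def specRad {ι : Type} [Fintype ι] [DecidableEq ι] (M : Matrix ι ι ℝ) : ℝ≥0∞ :=
  spectralRadius ℂ (M.map Complex.ofReal)

/-- The cycled (1-shift block-circulant) matrix: the (i,j) block equals `M j` if
`i = (j+1) mod N` and `0` otherwise. -/
def cyc (N : ℕ) {n m : ℕ} (M : ℕ → Matrix (Fin n) (Fin m) ℝ) :
    Matrix (Fin N × Fin n) (Fin N × Fin m) ℝ :=
  fun p q => if (p.1 : ℕ) = ((q.1 : ℕ) + 1) % N then M (q.1 : ℕ) p.2 q.2 else 0

/-- Block-diagonal matrix `diag (M 0, …, M (N-1))`. -/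
def bdiag (N : ℕ) {p n : ℕ} (M : ℕ → Matrix (Fin p) (Fin n) ℝ) :
    Matrix (Fin N × Fin p) (Fin N × Fin n) ℝ :=
  fun q r => if q.1 = r.1 then M (q.1 : ℕ) q.2 r.2 else 0

/-- The descending product `A (N-1) * A (N-2) * ⋯ * A 0` (monodromy-type product). -/
def prodDesc {n : ℕ} (A : ℕ → Matrix (Fin n) (Fin n) ℝ) (N : ℕ) : Matrix (Fin n) (Fin n) ℝ :=
  ((List.range N).reverse.map A).prod

/-- State transition product `Φ(j,i) = A (j-1) * ⋯ * A i` for `j > i`, and `Φ(i,i) = 1`. -/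
def stp {n : ℕ} (A : ℕ → Matrix (Fin n) (Fin n) ℝ) (j i : ℕ) : Matrix (Fin n) (Fin n) ℝ :=
  ((List.range' i (j - i)).reverse.map A).prod

/-- Periodic Markov parameter `M_k^{(j)} = C (k+j) * Φ(k+j, k+1) * B k`. -/
def markov {n m p : ℕ} (A : ℕ → Matrix (Fin n) (Fin n) ℝ) (B : ℕ → Matrix (Fin n) (Fin m) ℝ)
    (C : ℕ → Matrix (Fin p) (Fin n) ℝ) (k j : ℕ) : Matrix (Fin p) (Fin m) ℝ :=
  C (k + j) * stp A (k + j) (k + 1) * B k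

/-- Kronecker product `e_i ⊗ w` of the `(i+1)`-th standard unit vector of `ℝ^N` with `w`. -/
def kron {N q : ℕ} (i : Fin N) (w : Fin q → ℝ) : Fin N × Fin q → ℝ :=
  fun p => if p.1 = i then w p.2 else 0

/-- The residue `k mod N` as an element of `Fin N`. -/
def finMod (N : ℕ) (hN : 0 < N) (k : ℕ) : Fin N := ⟨k % N, Nat.mod_lt _ hN⟩

/-! ### Auxiliary lemmas -/

lemma srPow {A : Type*} [Ring A] [Algebra ℂ A] (a : A) {N : ℕ} (hN : 0 < N) :
    spectralRadius ℂ (a ^ N) = spectralRadius ℂ a ^ N := by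
  rw [spectralRadius, spectralRadius, spectrum.map_pow_of_pos a hN, iSup_image]
  simp only [nnnorm_pow, ENNReal.coe_pow]
  apply le_antisymm
  · refine iSup₂_le fun k hk => ?_
    exact pow_le_pow_left' (le_iSup₂ (f := fun k _ => (‖k‖₊ : ℝ≥0∞)) k hk) N
  · set R := ⨆ k ∈ spectrum ℂ a, ((‖k‖₊ : ℝ≥0∞)) ^ N with hR
    have h1 : (⨆ k ∈ spectrum ℂ a, ((‖k‖₊ : ℝ≥0∞))) ≤ R ^ ((N : ℝ))⁻¹ := by
      refine iSup₂_le fun k hk => ?_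
      have h2 : ((‖k‖₊ : ℝ≥0∞)) ^ N ≤ R := le_iSup₂ (f := fun k _ => ((‖k‖₊ : ℝ≥0∞)) ^ N) k hk
      calc ((‖k‖₊ : ℝ≥0∞)) = (((‖k‖₊ : ℝ≥0∞)) ^ N) ^ ((N:ℝ))⁻¹ :=
            (ENNReal.pow_rpow_inv_natCast hN.ne' _).symm
        _ ≤ R ^ ((N:ℝ))⁻¹ := ENNReal.rpow_le_rpow h2 (by positivity)
    calc (⨆ k ∈ spectrum ℂ a, ((‖k‖₊ : ℝ≥0∞))) ^ N ≤ (R ^ ((N:ℝ))⁻¹) ^ N :=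
          pow_le_pow_left' h1 N
      _ = R := ENNReal.rpow_inv_natCast_pow hN.ne' R

lemma biSup_diff_zero (s : Set ℂ) :
    ⨆ k ∈ s, ((‖k‖₊ : ℝ≥0∞)) = ⨆ k ∈ s \ {0}, ((‖k‖₊ : ℝ≥0∞)) := by
  apply le_antisymm
  · refine iSup₂_le fun k hk => ?_
    rcases eq_or_ne k 0 with rfl | h
    · simp
    · exact le_iSup₂ (f := fun k _ => ((‖k‖₊ : ℝ≥0∞))) k ⟨hk, h⟩
  · exact iSup₂_le fun k hk => le_iSup₂ (f := fun k _ => ((‖k‖₊ : ℝ≥0∞))) k hk.1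

lemma srComm {A : Type*} [Ring A] [Algebra ℂ A] (a b : A) :
    spectralRadius ℂ (a * b) = spectralRadius ℂ (b * a) := by
  rw [spectralRadius, spectralRadius, biSup_diff_zero (spectrum ℂ (a*b)),
    biSup_diff_zero (spectrum ℂ (b*a)), spectrum.nonzero_mul_comm]

lemma spectrum_bd {N n : ℕ} (B : Fin N → Matrix (Fin n) (Fin n) ℂ) :
    spectrum ℂ (Matrix.of (fun p q : Fin N × Fin n => if p.1 = q.1 then B q.1 p.2 q.2 else 0))
      = ⋃ j, spectrum ℂ (B j) := by
  set D := Matrix.of (fun p q : Fin N × Fin n => if p.1 = q.1 then B q.1 p.2 q.2 else 0)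
  ext μ
  have key : algebraMap ℂ (Matrix (Fin N × Fin n) (Fin N × Fin n) ℂ) μ - D
      = (blockDiagonal (fun j => algebraMap ℂ (Matrix (Fin n) (Fin n) ℂ) μ - B j)).submatrix
          (Equiv.prodComm (Fin N) (Fin n)) (Equiv.prodComm (Fin N) (Fin n)) := by
    ext p q
    rcases p with ⟨p1, p2⟩
    rcases q with ⟨q1, q2⟩
    simp only [Matrix.sub_apply, Matrix.algebraMap_matrix_apply, Matrix.submatrix_apply,
      Equiv.prodComm_apply, Prod.swap_prod_mk, Matrix.blockDiagonal_apply, Matrix.of_apply, D,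
      Prod.mk.injEq]
    rcases eq_or_ne p1 q1 with rfl | h
    · simp
    · simp [h, Ne.symm h]
  have hdet : ∀ {m : Type} [Fintype m] [DecidableEq m] (M : Matrix m m ℂ),
      ¬ IsUnit M ↔ M.det = 0 := by
    intro m _ _ M
    rw [Matrix.isUnit_iff_isUnit_det, isUnit_iff_ne_zero, not_not]
  simp only [Set.mem_iUnion, spectrum.mem_iff, hdet, key,
    Matrix.det_submatrix_equiv_self, Matrix.det_blockDiagonal]
  rw [Finset.prod_eq_zero_iff]
  simp

/-- cyclic partial product of length `k` starting at `j` (indices mod `N`) -/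
def Pcyc {n : ℕ} (A : ℕ → Matrix (Fin n) (Fin n) ℝ) (N k j : ℕ) : Matrix (Fin n) (Fin n) ℝ :=
  (((List.range k).reverse).map (fun t => A ((j + t) % N))).prod

lemma Pcyc_zero {n : ℕ} (A : ℕ → Matrix (Fin n) (Fin n) ℝ) (N j : ℕ) : Pcyc A N 0 j = 1 := rfl

lemma Pcyc_succ {n : ℕ} (A : ℕ → Matrix (Fin n) (Fin n) ℝ) (N k j : ℕ) :
    Pcyc A N (k + 1) j = Pcyc A N k ((j + 1) % N) * A (j % N) := by
  unfold Pcyc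
  rw [List.range_succ_eq_map, List.reverse_cons, List.map_append, List.prod_append]
  simp only [List.map_cons, List.map_nil, List.prod_cons, List.prod_nil, mul_one, Nat.add_zero]
  congr 1
  rw [List.map_reverse, List.map_reverse, List.map_map]
  congr 1
  congr 1
  apply List.map_congr_left
  intro t _
  simp only [Function.comp_apply]
  rw [Nat.mod_add_mod]
  have h : j + Nat.succ t = j + 1 + t := by omega
  rw [h]

lemma Pcyc_split {n : ℕ} (A : ℕ → Matrix (Fin n) (Fin n) ℝ) {N j : ℕ} (hj : j ≤ N) :
    Pcyc A N N j = ((List.range j).reverse.map A).prod *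
      ((List.range' j (N - j)).reverse.map A).prod := by
  unfold Pcyc
  have hsplit : List.range N = List.range' 0 (N - j) ++ List.range' (N - j) j := by
    rw [List.range_eq_range']
    have h := List.range'_append (s := 0) (m := N - j) (n := j) (step := 1)
    simp only [one_mul, Nat.zero_add] at h
    rw [h]
    congr 1
    omega
  rw [hsplit, List.reverse_append, List.map_append, List.prod_append]
  congr 1
  · rw [List.range'_eq_map_range, List.map_reverse, List.map_reverse, List.map_map]
    congr 1
    congr 1
    apply List.map_congr_left
    intro t ht
    simp only [Function.comp_apply]
    have ht' : t < j := List.mem_range.mp ht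
    have h1 : j + (N - j + t) = N + t := by omega
    rw [h1, Nat.add_mod_left, Nat.mod_eq_of_lt (by omega)]
  · have h0 : List.range' 0 (N - j) = List.range (N - j) := (List.range_eq_range' (n := N - j)).symm
    rw [h0, List.range'_eq_map_range, List.map_reverse, List.map_reverse, List.map_map]
    congr 1
    congr 1
    apply List.map_congr_left
    intro t ht
    simp only [Function.comp_apply]
    have ht' : t < N - j := List.mem_range.mp ht
    rw [Nat.mod_eq_of_lt (by omega)]

lemma Pcyc_split0 {n : ℕ} (A : ℕ → Matrix (Fin n) (Fin n) ℝ) {N j : ℕ} (hj : j ≤ N) :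
    Pcyc A N N 0 = ((List.range' j (N - j)).reverse.map A).prod *
      ((List.range j).reverse.map A).prod := by
  unfold Pcyc
  have hmc : List.map (fun t => A ((0 + t) % N)) (List.range N).reverse
      = List.map A (List.range N).reverse := by
    apply List.map_congr_left
    intro t ht
    have ht' : t < N := List.mem_range.mp (List.mem_reverse.mp ht)
    rw [Nat.zero_add, Nat.mod_eq_of_lt ht']
  rw [hmc]
  have hsplit : List.range N = List.range' 0 j ++ List.range' j (N - j) := by
    rw [List.range_eq_range']
    have h := List.range'_append (s := 0) (m := j) (n := N - j) (step := 1)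
    simp only [one_mul, Nat.zero_add] at h
    rw [h]
    congr 1
    omega
  rw [hsplit, List.reverse_append, List.map_append, List.prod_append]
  rw [← List.range_eq_range']

lemma Pcyc0_eq_prodDesc {n : ℕ} (A : ℕ → Matrix (Fin n) (Fin n) ℝ) (N : ℕ) :
    Pcyc A N N 0 = prodDesc A N := by
  have h := Pcyc_split0 A (le_refl N)
  rw [h]
  simp only [Nat.sub_self, List.range'_zero, List.reverse_nil, List.map_nil, List.prod_nil,
    one_mul]
  rfl

/-- the `k`-th power of the cycled matrix -/
def Scyc {n N : ℕ} (A : ℕ → Matrix (Fin n) (Fin n) ℝ) (k : ℕ) :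
    Matrix (Fin N × Fin n) (Fin N × Fin n) ℝ :=
  Matrix.of fun p q => if (p.1 : ℕ) = ((q.1 : ℕ) + k) % N then Pcyc A N k q.1 p.2 q.2 else 0

lemma Scyc_zero {n N : ℕ} (A : ℕ → Matrix (Fin n) (Fin n) ℝ) :
    (Scyc A 0 : Matrix (Fin N × Fin n) (Fin N × Fin n) ℝ) = 1 := by
  ext ⟨p1, p2⟩ ⟨q1, q2⟩
  simp only [Scyc, Matrix.of_apply, Nat.add_zero, Pcyc_zero, Matrix.one_apply, Prod.mk.injEq,
    Nat.mod_eq_of_lt q1.isLt, Fin.val_eq_val]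
  rcases eq_or_ne p1 q1 with rfl | h
  · simp
  · simp [h]

lemma Scyc_step {n N : ℕ} (hN : 0 < N) (A : ℕ → Matrix (Fin n) (Fin n) ℝ) (k : ℕ) :
    (Scyc A k : Matrix (Fin N × Fin n) (Fin N × Fin n) ℝ) * cyc N A = Scyc A (k + 1) := by
  ext ⟨p1, p2⟩ ⟨q1, q2⟩
  rw [Matrix.mul_apply, Fintype.sum_prod_type]
  set j' : Fin N := ⟨((q1 : ℕ) + 1) % N, Nat.mod_lt _ hN⟩ with hj'
  rw [Finset.sum_eq_single j']
  · have hcond : ((((q1 : ℕ) + 1) % N) + k) % N = ((q1 : ℕ) + (k + 1)) % N := by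
      rw [Nat.mod_add_mod]
      congr 1
      omega
    simp only [Scyc, cyc, Matrix.of_apply, if_true]
    rw [hcond]
    by_cases h : (p1 : ℕ) = ((q1 : ℕ) + (k + 1)) % N
    · simp only [if_pos h]
      rw [Pcyc_succ, Nat.mod_eq_of_lt q1.isLt, Matrix.mul_apply]
      exact Finset.sum_congr rfl fun x _ => by simp [hj']
    · simp only [if_neg h, zero_mul]
      simp
  · intro b _ hb
    apply Finset.sum_eq_zero
    intro r2 _
    have : ¬ ((b : ℕ) = ((q1 : ℕ) + 1) % N) := by
      intro hc
      apply hb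
      apply Fin.ext
      rw [hc, hj']
    simp [cyc, this]
  · intro h
    exact absurd (Finset.mem_univ j') h

lemma cyc_pow {n N : ℕ} (hN : 0 < N) (A : ℕ → Matrix (Fin n) (Fin n) ℝ) (k : ℕ) :
    (cyc N A) ^ k = Scyc A k := by
  induction k with
  | zero => rw [pow_zero, Scyc_zero]
  | succ k ih => rw [pow_succ, ih, Scyc_step hN]

lemma map_ofReal_mul {ι : Type} [Fintype ι] (M M' : Matrix ι ι ℝ) :
    (M * M').map Complex.ofReal = M.map Complex.ofReal * M'.map Complex.ofReal := by
  have h : (Complex.ofReal : ℝ → ℂ) = ⇑Complex.ofRealHom := by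
    funext x
    simp [Complex.ofRealHom_eq_coe]
  rw [h, Matrix.map_mul]

lemma map_ofReal_pow {ι : Type} [Fintype ι] [DecidableEq ι] (M : Matrix ι ι ℝ) (k : ℕ) :
    (M ^ k).map Complex.ofReal = (M.map Complex.ofReal) ^ k := by
  induction k with
  | zero =>
    simp only [pow_zero]
    exact Matrix.map_one _ Complex.ofReal_zero Complex.ofReal_one
  | succ k ih => rw [pow_succ, pow_succ, map_ofReal_mul, ih]

/-- The spectral radius of the cycled block matrix `Ǎ` equals the `N`-th
root of the spectral radius of the monodromy matrix `Φ = A (N-1) ⋯ A 0`; in particular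
`ρ(Ǎ) < 1 ↔ ρ(Φ) < 1`. -/
theorem specRad_cycled {n N : ℕ} (hN : 1 ≤ N) (A : ℕ → Matrix (Fin n) (Fin n) ℝ) :
    specRad (cyc N A) = specRad (prodDesc A N) ^ (1 / (N : ℝ)) ∧
      (specRad (cyc N A) < 1 ↔ specRad (prodDesc A N) < 1) := by
  have hN0 : 0 < N := hN
  haveI : Nonempty (Fin N) := ⟨⟨0, hN0⟩⟩
  have hmain : specRad (cyc N A) ^ N = specRad (prodDesc A N) := by
    unfold specRad
    rw [← srPow _ hN0, ← map_ofReal_pow, cyc_pow hN0]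
    have hD : (Scyc A N : Matrix (Fin N × Fin n) (Fin N × Fin n) ℝ).map Complex.ofReal
        = Matrix.of (fun p q : Fin N × Fin n => if p.1 = q.1
            then ((Pcyc A N N (q.1 : ℕ)).map Complex.ofReal) p.2 q.2 else 0) := by
      ext ⟨p1, p2⟩ ⟨q1, q2⟩
      simp only [Matrix.map_apply, Scyc, Matrix.of_apply]
      have hq : ((q1 : ℕ) + N) % N = (q1 : ℕ) := by
        rw [Nat.add_mod_right, Nat.mod_eq_of_lt q1.isLt]
      rw [hq]
      rcases eq_or_ne p1 q1 with rfl | h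
      · simp
      · rw [if_neg (fun hc => h (Fin.ext hc)), if_neg h]
        exact Complex.ofReal_zero
    rw [hD]
    have hsr : spectralRadius ℂ (Matrix.of (fun p q : Fin N × Fin n => if p.1 = q.1
            then ((Pcyc A N N (q.1 : ℕ)).map Complex.ofReal) p.2 q.2 else 0))
        = ⨆ j : Fin N, spectralRadius ℂ ((Pcyc A N N (j : ℕ)).map Complex.ofReal) := by
      rw [spectralRadius, spectrum_bd (fun j : Fin N => (Pcyc A N N (j : ℕ)).map Complex.ofReal),
        iSup_iUnion]
      rfl
    rw [hsr]
    have hterm : ∀ j : Fin N, spectralRadius ℂ ((Pcyc A N N (j : ℕ)).map Complex.ofReal)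
        = spectralRadius ℂ ((prodDesc A N).map Complex.ofReal) := by
      intro j
      have hj : (j : ℕ) ≤ N := le_of_lt j.isLt
      rw [← Pcyc0_eq_prodDesc, Pcyc_split A hj, Pcyc_split0 A hj,
        map_ofReal_mul, map_ofReal_mul, srComm]
    simp only [hterm]
    exact iSup_const
  constructor
  · rw [← hmain, one_div, ENNReal.pow_rpow_inv_natCast hN0.ne']
  · rw [← hmain]
    exact (pow_lt_one_iff hN0.ne').symm
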